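/- Let n be a positive integer, Φ an n×n real orthogonal matrix, c : Fin n → ℝ with c i > 0 for all i, R an n×n real symmetric positive definite matrix and λ ≥ 0. For q ∈ ℝ define D(q) = diag((c i)^{2q}) (real powers) and S(q) = (I + λ R Φ D(q) Φᵀ)⁻¹. Then for every q₀ ≠ 0 the map q ↦ R⁻¹(I − S(q)) is differentiable at q₀ with derivative (1/q₀) · R⁻¹ (I − S(q₀)) · Φ diag(log((c i)^{2q₀})) Φᵀ · S(q₀). -/

import Mathlib

open Matrix

attribute [local instance] Matrix.normedAddCommGroup Matrix.normedSpace

private lemma hasDerivAt_matrix {n : ℕ} {f : ℝ → Matrix (Fin n) (Fin n) ℝ}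
    {f' : Matrix (Fin n) (Fin n) ℝ} {x : ℝ}
    (h : ∀ i j, HasDerivAt (fun q => f q i j) (f' i j) x) : HasDerivAt f f' x :=
  hasDerivAt_pi.2 fun i => hasDerivAt_pi.2 fun j => h i j

private lemma entry_mul_hasDerivAt {n : ℕ} {f g : ℝ → Matrix (Fin n) (Fin n) ℝ}
    {f' g' : Matrix (Fin n) (Fin n) ℝ} {x : ℝ}
    (hf : ∀ i j, HasDerivAt (fun q => f q i j) (f' i j) x)
    (hg : ∀ i j, HasDerivAt (fun q => g q i j) (g' i j) x) (i j : Fin n) :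
    HasDerivAt (fun q => (f q * g q) i j) ((f' * g x + f x * g') i j) x := by
  simp only [Matrix.mul_apply, Matrix.add_apply]
  rw [← Finset.sum_add_distrib]
  exact HasDerivAt.fun_sum fun k _ => (hf i k).mul (hg k j)

private lemma differentiableAt_det {n : ℕ} {M : ℝ → Matrix (Fin n) (Fin n) ℝ} {x : ℝ}
    (h : ∀ i j, DifferentiableAt ℝ (fun q => M q i j) x) :
    DifferentiableAt ℝ (fun q => (M q).det) x := by
  simp only [Matrix.det_apply']
  exact DifferentiableAt.fun_sum fun σ _ =>
    (DifferentiableAt.fun_finsetProd (fun i _ => h (σ i) i)).const_mul _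

private lemma hasDerivAt_conj_diag {n : ℕ} (P Q : Matrix (Fin n) (Fin n) ℝ)
    {d : ℝ → Fin n → ℝ} {d' : Fin n → ℝ} {x : ℝ}
    (h : ∀ k, HasDerivAt (fun q => d q k) (d' k) x) (i j : Fin n) :
    HasDerivAt (fun q => (P * Matrix.diagonal (d q) * Q) i j)
      ((P * Matrix.diagonal d' * Q) i j) x := by
  have hPDQ : ∀ (e : Fin n → ℝ), (P * Matrix.diagonal e * Q) i j = ∑ k, P i k * e k * Q k j := by
    intro e
    rw [Matrix.mul_apply]
    simp only [Matrix.mul_diagonal]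
  simp only [hPDQ]
  exact HasDerivAt.fun_sum fun k _ => ((h k).const_mul (P i k)).mul_const (Q k j)

/-- Derivative of `R⁻¹(I − S(q))` with respect to the penalty order `q`, where
the penalty eigenvalues are `(c i)^{2q}` (real powers):
`∂{R⁻¹(I − S)}/∂q = (1/q) R⁻¹(I − S) Φ diag{log((c i)^{2q})} Φᵀ S`. -/
theorem smoother_deriv_in_q
    (n : ℕ) (hn : 0 < n)
    (Φ : Matrix (Fin n) (Fin n) ℝ)
    (hΦ₁ : Φᵀ * Φ = 1) (hΦ₂ : Φ * Φᵀ = 1)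
    (c : Fin n → ℝ) (hc : ∀ i, 0 < c i)
    (R : Matrix (Fin n) (Fin n) ℝ) (hR : R.PosDef)
    (lam : ℝ) (hlam : 0 ≤ lam)
    (S : ℝ → Matrix (Fin n) (Fin n) ℝ)
    (hS : ∀ q : ℝ, S q =
      ((1 : Matrix (Fin n) (Fin n) ℝ) +
        lam • (R * Φ * Matrix.diagonal (fun i => (c i) ^ (2 * q)) * Φᵀ))⁻¹)
    (q₀ : ℝ) (hq₀ : q₀ ≠ 0) :
    HasDerivAt (fun q => R⁻¹ * (1 - S q))
      ((1 / q₀) • (R⁻¹ * (1 - S q₀) *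
        (Φ * Matrix.diagonal (fun i => Real.log ((c i) ^ (2 * q₀))) * Φᵀ) * S q₀)) q₀ := by
  classical
  set A : ℝ → Matrix (Fin n) (Fin n) ℝ := fun q =>
    (1 : Matrix (Fin n) (Fin n) ℝ) +
      lam • (R * Φ * Matrix.diagonal (fun i => (c i) ^ (2 * q)) * Φᵀ) with hAdef
  have hRdet : IsUnit R.det := hR.det_pos.ne'.isUnit
  -- invertibility of A q
  have hAdet : ∀ q, IsUnit (A q).det := by
    intro q
    have hP : (R⁻¹ + Φ * Matrix.diagonal (fun i => lam * (c i) ^ (2 * q)) * Φᵀ).PosDef := by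
      apply hR.inv.add_posSemidef
      have h1 : (Matrix.diagonal (fun i => lam * (c i) ^ (2 * q))).PosSemidef :=
        Matrix.posSemidef_diagonal_iff.2 fun i =>
          mul_nonneg hlam (Real.rpow_pos_of_pos (hc i) _).le
      exact h1.mul_mul_conjTranspose_same Φ
    have hAeq : A q = R * (R⁻¹ + Φ * Matrix.diagonal (fun i => lam * (c i) ^ (2 * q)) * Φᵀ) := by
      rw [hAdef]
      simp only [mul_add, Matrix.mul_nonsing_inv _ hRdet]
      congr 1
      rw [show Matrix.diagonal (fun i => lam * (c i) ^ (2 * q)) =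
          lam • Matrix.diagonal (fun i => (c i) ^ (2 * q)) from by
        rw [← Matrix.diagonal_smul]; rfl]
      simp only [Matrix.mul_smul, Matrix.smul_mul, mul_assoc]
    rw [hAeq, Matrix.det_mul]
    exact hRdet.mul hP.det_pos.ne'.isUnit
  have hSA : ∀ q, S q * A q = 1 := fun q => by
    rw [hS q]; exact Matrix.nonsing_inv_mul _ (hAdet q)
  have hAS : ∀ q, A q * S q = 1 := fun q => by
    rw [hS q]; exact Matrix.mul_nonsing_inv _ (hAdet q)
  -- derivative of the diagonal entries
  set d' : Fin n → ℝ := fun k => (c k) ^ (2 * q₀) * Real.log (c k) * 2 with hd'def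
  have hd : ∀ k, HasDerivAt (fun q => (c k) ^ (2 * q)) (d' k) q₀ := by
    intro k
    have h1 := (Real.hasStrictDerivAt_const_rpow (hc k) (2 * q₀)).hasDerivAt
    have h2 : HasDerivAt (fun q : ℝ => 2 * q) 2 q₀ := by
      simpa using (hasDerivAt_id q₀).const_mul 2
    have := h1.comp q₀ h2
    simpa [hd'def, Function.comp_def, mul_assoc] using this
  -- derivative of A entrywise
  set A' : Matrix (Fin n) (Fin n) ℝ := lam • (R * Φ * Matrix.diagonal d' * Φᵀ) with hA'def
  have hA' : ∀ i j, HasDerivAt (fun q => A q i j) (A' i j) q₀ := by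
    intro i j
    have h1 := hasDerivAt_conj_diag (R * Φ) Φᵀ hd i j
    have h2 := (h1.const_mul lam).const_add ((1 : Matrix (Fin n) (Fin n) ℝ) i j)
    simpa [hAdef, hA'def, Matrix.add_apply, Matrix.smul_apply, smul_eq_mul] using h2
  have hAdiff : ∀ i j, DifferentiableAt ℝ (fun q => A q i j) q₀ :=
    fun i j => (hA' i j).differentiableAt
  -- differentiability of S entrywise
  have hSdiff : ∀ i j, DifferentiableAt ℝ (fun q => S q i j) q₀ := by
    intro i j
    have hadj : DifferentiableAt ℝ (fun q => (A q).adjugate i j) q₀ := by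
      simp only [Matrix.adjugate_apply]
      apply differentiableAt_det
      intro k l
      rcases eq_or_ne k j with rfl | hk
      · simp only [Matrix.updateRow_self]
        exact differentiableAt_const _
      · simp only [Matrix.updateRow_ne hk]
        exact hAdiff k l
    have heq : (fun q => S q i j)
        = fun q => ((A q).det)⁻¹ * (A q).adjugate i j := by
      funext q
      rw [hS q, show ((1 : Matrix (Fin n) (Fin n) ℝ) +
        lam • (R * Φ * Matrix.diagonal (fun i => (c i) ^ (2 * q)) * Φᵀ)) = A q from rfl,
        Matrix.inv_def, Matrix.smul_apply, smul_eq_mul, Ring.inverse_eq_inv]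
    rw [heq]
    exact ((differentiableAt_det hAdiff).inv (hAdet q₀).ne_zero).mul hadj
  set M : Matrix (Fin n) (Fin n) ℝ :=
    Matrix.of (fun i j => deriv (fun q => S q i j) q₀) with hMdef
  have hM : ∀ i j, HasDerivAt (fun q => S q i j) (M i j) q₀ :=
    fun i j => (hSdiff i j).hasDerivAt
  -- differentiate A q * S q = 1
  have key : A' * S q₀ + A q₀ * M = 0 := by
    ext i j
    have h1 := entry_mul_hasDerivAt hA' hM i j
    have h2 : HasDerivAt (fun q => (A q * S q) i j) 0 q₀ := by
      have : (fun q => (A q * S q) i j) = fun _ => (1 : Matrix (Fin n) (Fin n) ℝ) i j :=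
        funext fun q => by rw [hAS q]
      rw [this]; exact hasDerivAt_const _ _
    have := h1.unique h2
    simpa using this
  have hMeq : M = -(S q₀ * (A' * S q₀)) := by
    have h1 : A q₀ * M = -(A' * S q₀) := by
      rw [eq_neg_iff_add_eq_zero, add_comm]; exact key
    calc M = (S q₀ * A q₀) * M := by rw [hSA q₀, one_mul]
    _ = S q₀ * (A q₀ * M) := by rw [mul_assoc]
    _ = S q₀ * -(A' * S q₀) := by rw [h1]
    _ = -(S q₀ * (A' * S q₀)) := by rw [mul_neg]
  -- derivative of the goal function, entrywise
  have final : HasDerivAt (fun q => R⁻¹ * (1 - S q)) (R⁻¹ * (-M)) q₀ := by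
    apply hasDerivAt_matrix
    intro i j
    have h1 : ∀ i j, HasDerivAt (fun q => ((1 : Matrix (Fin n) (Fin n) ℝ) - S q) i j)
        ((-M) i j) q₀ := by
      intro i j
      have := ((hM i j).const_sub ((1 : Matrix (Fin n) (Fin n) ℝ) i j))
      simpa [Matrix.sub_apply, Matrix.neg_apply] using this
    have h2 := entry_mul_hasDerivAt (f := fun _ => R⁻¹) (f' := 0) (g := fun q => 1 - S q)
      (g' := -M) (fun i j => by simpa using hasDerivAt_const q₀ (R⁻¹ i j)) h1 i j
    simpa [Matrix.zero_mul, zero_add] using h2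
  -- identify the derivative with the stated formula
  have h1mS : (1 : Matrix (Fin n) (Fin n) ℝ) - S q₀
      = S q₀ * (lam • (R * Φ * Matrix.diagonal (fun i => (c i) ^ (2 * q₀)) * Φᵀ)) := by
    calc (1 : Matrix (Fin n) (Fin n) ℝ) - S q₀ = S q₀ * A q₀ - S q₀ * 1 := by
          rw [hSA q₀, mul_one]
    _ = S q₀ * (A q₀ - 1) := by rw [Matrix.mul_sub]
    _ = _ := by rw [hAdef]; simp
  have hdiag : Matrix.diagonal d' = (1 / q₀) •
      (Matrix.diagonal (fun i => (c i) ^ (2 * q₀)) *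
        Matrix.diagonal (fun i => Real.log ((c i) ^ (2 * q₀)))) := by
    rw [Matrix.diagonal_mul_diagonal, ← Matrix.diagonal_smul]
    exact congrArg Matrix.diagonal (funext fun k => by
      show c k ^ (2 * q₀) * Real.log (c k) * 2
          = (1 / q₀) * (c k ^ (2 * q₀) * Real.log (c k ^ (2 * q₀)))
      rw [Real.log_rpow (hc k)]
      field_simp)
  have main : R⁻¹ * (-M) = (1 / q₀) • (R⁻¹ * (1 - S q₀) *
      (Φ * Matrix.diagonal (fun i => Real.log ((c i) ^ (2 * q₀))) * Φᵀ) * S q₀) := by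
    rw [hMeq, neg_neg, h1mS, hA'def, hdiag]
    simp only [Matrix.smul_mul, Matrix.mul_smul, smul_smul, mul_assoc]
    rw [show Φᵀ * (Φ * (Matrix.diagonal (fun i => Real.log ((c i) ^ (2 * q₀))) * (Φᵀ * S q₀)))
        = Matrix.diagonal (fun i => Real.log ((c i) ^ (2 * q₀))) * (Φᵀ * S q₀) from by
      rw [← mul_assoc, hΦ₁, one_mul]]
    congr 1
    ring
  rw [← main]
  exact final
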